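/- arXiv:1711.06249 — 2 statements merged into one kernel-verified Lean document; each statement's English description precedes it below -/
import Mathlib

section
/- Let Y₁,…,Yₙ be i.i.d. nonnegative random variables with continuous distribution function G, and let Gₙ be the empirical distribution function. For z > 0 fixed and continuous functions w : [0,1]² → ℝ₊ and f : ℝ₊² → ℝ₊ (each non-increasing in their first argument), the plug-in estimator Jₙ(w,f) = (1/n) ∑ⱼ w(Gₙ(Y₍ⱼ₎), Gₙ(z)) f(Y₍ⱼ₎, z) 𝟙(Y₍ⱼ₎ ≤ z) converges almost surely to J(w,f) = ∫₀ᶻ w(G(y),G(z)) f(y,z) dG(y) as n → ∞. -/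
open MeasureTheory ProbabilityTheory Set Filter
open Topology

/-- The empirical cumulative distribution function of the first `n` observations. -/
noncomputable def empCDF {Ω : Type*} (Y : ℕ → Ω → ℝ) (n : ℕ) (ω : Ω) (y : ℝ) : ℝ :=
  (n : ℝ)⁻¹ * ∑ j ∈ Finset.range n, if Y j ω ≤ y then (1 : ℝ) else 0

lemma empCDF_nonneg {Ω : Type*} (Y : ℕ → Ω → ℝ) (n : ℕ) (ω : Ω) (y : ℝ) :
    0 ≤ empCDF Y n ω y := by
  unfold empCDF
  apply mul_nonneg (by positivity)
  apply Finset.sum_nonneg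
  intro j _
  split <;> norm_num

lemma empCDF_le_one {Ω : Type*} (Y : ℕ → Ω → ℝ) (n : ℕ) (ω : Ω) (y : ℝ) :
    empCDF Y n ω y ≤ 1 := by
  unfold empCDF
  have h1 : (∑ j ∈ Finset.range n, if Y j ω ≤ y then (1:ℝ) else 0) ≤ n := by
    calc (∑ j ∈ Finset.range n, if Y j ω ≤ y then (1:ℝ) else 0)
        ≤ ∑ j ∈ Finset.range n, (1:ℝ) := by
          apply Finset.sum_le_sum; intro j _; split <;> norm_num
      _ = n := by simp
  rcases Nat.eq_zero_or_pos n with h | h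
  · simp [h]
  · have hn : (0:ℝ) < n := by exact_mod_cast h
    rw [inv_mul_le_iff₀ hn, mul_one]
    exact h1

lemma empCDF_mono {Ω : Type*} (Y : ℕ → Ω → ℝ) (n : ℕ) (ω : Ω) :
    Monotone (empCDF Y n ω) := by
  intro a b hab
  unfold empCDF
  apply mul_le_mul_of_nonneg_left _ (by positivity)
  apply Finset.sum_le_sum
  intro j _
  by_cases h : Y j ω ≤ a
  · simp [h, h.trans hab]
  · simp only [if_neg h]; split <;> norm_num

lemma slln_comp {Ω : Type*} [MeasurableSpace Ω] (P : Measure Ω) [IsProbabilityMeasure P]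
    (μ : Measure ℝ) (Y : ℕ → Ω → ℝ)
    (hY_meas : ∀ j, Measurable (Y j))
    (hY_indep : iIndepFun Y P)
    (hY_law : ∀ j, Measure.map (Y j) P = μ)
    (h : ℝ → ℝ) (hm : Measurable h) (C : ℝ) (hb : ∀ᵐ y ∂μ, |h y| ≤ C) :
    ∀ᵐ ω ∂P, Tendsto (fun n : ℕ => (n : ℝ)⁻¹ * ∑ j ∈ Finset.range n, h (Y j ω))
      atTop (𝓝 (∫ y, h y ∂μ)) := by
  set X : ℕ → Ω → ℝ := fun j ω => h (Y j ω) with hX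
  have hXm : ∀ j, Measurable (X j) := fun j => hm.comp (hY_meas j)
  have hbμ : ∀ᵐ y ∂(Measure.map (Y 0) P), |h y| ≤ C := by rw [hY_law 0]; exact hb
  have hbP : ∀ᵐ ω ∂P, |X 0 ω| ≤ C := ae_of_ae_map (hY_meas 0).aemeasurable hbμ
  have hint : Integrable (X 0) P := by
    apply (integrable_const C).mono' (hXm 0).aestronglyMeasurable
    filter_upwards [hbP] with ω hω
    simpa [Real.norm_eq_abs] using hω
  have hindep : Pairwise (Function.onFun (IndepFun · · P) X) :=
    fun i j hij => (hY_indep.indepFun hij).comp hm hm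
  have hident : ∀ i, IdentDistrib (X i) (X 0) P P := fun i =>
    (IdentDistrib.mk (hY_meas i).aemeasurable (hY_meas 0).aemeasurable
      (by rw [hY_law i, hY_law 0])).comp hm
  have hE : (∫ ω, X 0 ω ∂P) = ∫ y, h y ∂μ := by
    rw [← hY_law 0, integral_map (hY_meas 0).aemeasurable hm.aestronglyMeasurable]
  have := strong_law_ae_real X hint hindep hident
  filter_upwards [this] with ω hω
  have : (fun n : ℕ => (n : ℝ)⁻¹ * ∑ j ∈ Finset.range n, h (Y j ω))
      = fun n : ℕ => (∑ j ∈ Finset.range n, X j ω) / n := by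
    funext n; rw [div_eq_inv_mul]
  rw [this, ← hE]
  exact hω

lemma gc_det (G H : ℝ → ℝ) (hGmono : Monotone G) (hHmono : Monotone H)
    (hG0 : ∀ y, 0 ≤ G y) (hH0 : ∀ y, 0 ≤ H y) (hG1 : ∀ y, G y ≤ 1) (hH1 : ∀ y, H y ≤ 1)
    (m : ℕ) (hm : 2 ≤ m) (t : ℕ → ℝ)
    (ht : ∀ k, 1 ≤ k → k < m → G (t k) = (k : ℝ) / m)
    (e : ℝ) (he : 0 ≤ e) (hte : ∀ k, 1 ≤ k → k < m → |H (t k) - G (t k)| ≤ e)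
    (y : ℝ) : |H y - G y| ≤ 1 / m + e := by
  have hm0 : (0:ℝ) < m := by
    have : (0:ℕ) < m := by omega
    exact_mod_cast this
  set S := (Finset.range m).filter (fun k => k = 0 ∨ t k ≤ y) with hS
  have h0S : 0 ∈ S := by
    exact Finset.mem_filter.mpr ⟨Finset.mem_range.mpr (by omega), Or.inl rfl⟩
  have hSne : S.Nonempty := ⟨0, h0S⟩
  set k := S.max' hSne with hk
  have hkS : k ∈ S := S.max'_mem hSne
  have hkm : k < m := Finset.mem_range.mp (Finset.mem_filter.mp hkS).1
  have hkp : k = 0 ∨ t k ≤ y := (Finset.mem_filter.mp hkS).2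
  have hGy_ge : (k : ℝ) / m ≤ G y := by
    rcases Nat.eq_zero_or_pos k with h0 | h1
    · rw [h0]; simpa using hG0 y
    · rcases hkp with h | h
      · omega
      · rw [← ht k h1 hkm]; exact hGmono h
  have hHy_ge : (k : ℝ) / m - e ≤ H y := by
    rcases Nat.eq_zero_or_pos k with h0 | h1
    · rw [h0]; push_cast; simp only [zero_div]; linarith [hH0 y]
    · rcases hkp with h | h
      · omega
      · have h1' := abs_le.mp (hte k h1 hkm)
        have := hHmono h
        have := ht k h1 hkm
        linarith
  rcases Nat.lt_or_ge (k+1) m with hlt | hge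
  · -- Case k+1 < m
    have hk1m : k+1 ∉ S := fun hmem => absurd (S.le_max' _ hmem) (by omega)
    have hy_le : y ≤ t (k+1) := by
      by_contra hcon
      push_neg at hcon
      exact hk1m (Finset.mem_filter.mpr ⟨Finset.mem_range.mpr hlt, Or.inr hcon.le⟩)
    have hG1k : G (t (k+1)) = ((k:ℝ)+1)/m := by
      rw [ht (k+1) (by omega) hlt]; push_cast; ring
    have habs := abs_le.mp (hte (k+1) (by omega) hlt)
    have hGy_le : G y ≤ ((k:ℝ)+1)/m := by rw [← hG1k]; exact hGmono hy_le
    have hHy_le : H y ≤ H (t (k+1)) := hHmono hy_le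
    have hstep : ((k:ℝ)+1)/m = (k:ℝ)/m + 1/m := by rw [add_div]
    rw [abs_le]
    constructor
    · linarith
    · linarith
  · -- Case k+1 = m
    have hkm1 : k + 1 = m := by omega
    have hc : (k:ℝ) + 1 = m := by exact_mod_cast hkm1
    have hsum : (k:ℝ)/m + 1/m = 1 := by
      rw [← add_div, hc, div_self hm0.ne']
    rw [abs_le]
    constructor
    · linarith [hG1 y]
    · linarith [hH1 y]

lemma gc_as {Ω : Type*} [MeasurableSpace Ω] (P : Measure Ω) [IsProbabilityMeasure P]
    (μ : Measure ℝ) [IsProbabilityMeasure μ]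
    (Y : ℕ → Ω → ℝ)
    (hY_meas : ∀ j, Measurable (Y j))
    (hY_indep : iIndepFun Y P)
    (hY_law : ∀ j, Measure.map (Y j) P = μ)
    (G : ℝ → ℝ) (hG : ∀ y, (μ (Iic y)).toReal = G y) (hGcont : Continuous G)
    (hIio : μ (Iio 0) = 0) :
    ∀ᵐ ω ∂P, ∀ ε > 0, ∀ᶠ n in atTop, ∀ y, |empCDF Y n ω y - G y| ≤ ε := by
  classical
  have hGmono : Monotone G := by
    intro a b hab
    rw [← hG a, ← hG b]
    exact ENNReal.toReal_mono (measure_ne_top μ _) (measure_mono (Iic_subset_Iic.mpr hab))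
  have hG0 : ∀ y, 0 ≤ G y := fun y => (hG y) ▸ ENNReal.toReal_nonneg
  have hG1 : ∀ y, G y ≤ 1 := by
    intro y
    rw [← hG y]
    have := ENNReal.toReal_mono (measure_ne_top μ univ) (measure_mono (subset_univ (Iic y)))
    simpa [measure_univ] using this
  have hGneg : G (-1) = 0 := by
    rw [← hG]
    have : μ (Iic (-1:ℝ)) = 0 :=
      measure_mono_null (fun x hx => by simpa using lt_of_le_of_lt hx (by norm_num)) hIio
    simp [this]
  have hGtop : Tendsto G atTop (𝓝 1) := by
    have h1 := tendsto_measure_Iic_atTop μ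
    have h2 : Tendsto (fun x => (μ (Iic x)).toReal) atTop (𝓝 (μ univ).toReal) :=
      (ENNReal.tendsto_toReal (measure_ne_top μ univ)).comp h1
    have heq : (fun x => (μ (Iic x)).toReal) = G := funext hG
    rw [heq] at h2
    simpa [measure_univ] using h2
  have hsurj : ∀ c : ℝ, 0 < c → c < 1 → ∃ x, G x = c := by
    intro c h0 h1c
    obtain ⟨b, hb⟩ : ∃ b, c < G b := (hGtop.eventually (eventually_gt_nhds h1c)).exists
    have hab : (-1:ℝ) ≤ b := by
      by_contra hcon
      push_neg at hcon
      have := hGmono hcon.le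
      rw [hGneg] at this
      linarith
    have hmem : c ∈ Icc (G (-1)) (G b) := by rw [hGneg]; exact ⟨h0.le, hb.le⟩
    obtain ⟨x, _, hx⟩ := intermediate_value_Icc hab hGcont.continuousOn hmem
    exact ⟨x, hx⟩
  set T : ℚ → ℝ := fun q => if h : ∃ x, G x = (q:ℝ) then h.choose else 0 with hTdef
  have hT : ∀ q : ℚ, 0 < (q:ℝ) → (q:ℝ) < 1 → G (T q) = (q:ℝ) := by
    intro q h0 h1
    have h := hsurj (q:ℝ) h0 h1
    simp only [hTdef, dif_pos h]
    exact h.choose_spec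
  have hq : ∀ q : ℚ, ∀ᵐ ω ∂P,
      Tendsto (fun n => empCDF Y n ω (T q)) atTop (𝓝 (G (T q))) := by
    intro q
    have hmeas : Measurable (fun y : ℝ => if y ≤ T q then (1:ℝ) else 0) :=
      Measurable.ite measurableSet_Iic measurable_const measurable_const
    have hint : (∫ y, (if y ≤ T q then (1:ℝ) else 0) ∂μ) = G (T q) := by
      have heq : (fun y => if y ≤ T q then (1:ℝ) else 0)
          = (Iic (T q)).indicator (fun _ => (1:ℝ)) := by
        funext y; by_cases h : y ≤ T q <;> simp [indicator, h, mem_Iic]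
      rw [heq, integral_indicator measurableSet_Iic, setIntegral_const, smul_eq_mul, mul_one, Measure.real, hG]
    have := slln_comp P μ Y hY_meas hY_indep hY_law _ hmeas 1
      (ae_of_all _ (fun y => by split <;> norm_num))
    rw [hint] at this
    exact this
  have hq' : ∀ᵐ ω ∂P, ∀ q : ℚ,
      Tendsto (fun n => empCDF Y n ω (T q)) atTop (𝓝 (G (T q))) := ae_all_iff.mpr hq
  filter_upwards [hq'] with ω hω
  intro ε hε
  obtain ⟨m, hm⟩ := exists_nat_gt (max 2 (2/ε))
  have hm2 : 2 ≤ m := by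
    have : (2:ℝ) < m := lt_of_le_of_lt (le_max_left _ _) hm
    exact_mod_cast this.le
  have hm0 : (0:ℝ) < m := by
    have : (0:ℕ) < m := by omega
    exact_mod_cast this
  have hmε : 1/(m:ℝ) ≤ ε/2 := by
    have h2ε : 2/ε < m := lt_of_le_of_lt (le_max_right _ _) hm
    have h2 : 2 < (m:ℝ) * ε := (div_lt_iff₀ hε).mp h2ε
    rw [div_le_div_iff₀ hm0 (by norm_num)]
    nlinarith
  set t : ℕ → ℝ := fun k => T ((k : ℚ)/(m:ℚ)) with htdef
  have ht : ∀ k, 1 ≤ k → k < m → G (t k) = (k:ℝ)/m := by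
    intro k h1 h2
    have hk0 : (0:ℝ) < (k:ℝ) := by exact_mod_cast h1
    have hq0 : (0:ℝ) < (((k:ℚ)/(m:ℚ) : ℚ) : ℝ) := by push_cast; positivity
    have hq1 : (((k:ℚ)/(m:ℚ) : ℚ) : ℝ) < 1 := by
      push_cast
      rw [div_lt_one hm0]
      exact_mod_cast h2
    have := hT _ hq0 hq1
    rw [htdef]
    simp only []
    rw [this]
    push_cast
    ring
  have hev : ∀ᶠ n in atTop, ∀ k ∈ Finset.Ico 1 m,
      |empCDF Y n ω (t k) - G (t k)| ≤ ε/2 := by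
    rw [eventually_all_finset]
    intro k hk
    obtain ⟨N, hN⟩ := Metric.tendsto_atTop.mp (hω ((k:ℚ)/(m:ℚ))) (ε/2) (by positivity)
    rw [eventually_atTop]
    refine ⟨N, fun n hn => ?_⟩
    have := hN n hn
    rw [Real.dist_eq] at this
    exact this.le
  filter_upwards [hev] with n hn y
  have := gc_det G (empCDF Y n ω) hGmono (empCDF_mono Y n ω) hG0 (empCDF_nonneg Y n ω)
    hG1 (empCDF_le_one Y n ω) m hm2 t ht (ε/2) (by positivity)
    (fun k h1 h2 => hn k (Finset.mem_Ico.mpr ⟨h1, h2⟩)) y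
  linarith

theorem stmt1
    {Ω : Type*} [MeasurableSpace Ω] (P : Measure Ω) [IsProbabilityMeasure P]
    (μ : Measure ℝ) [IsProbabilityMeasure μ]
    (Y : ℕ → Ω → ℝ)
    (hY_meas : ∀ j, Measurable (Y j))
    (hY_indep : iIndepFun Y P)
    (hY_law : ∀ j, Measure.map (Y j) P = μ)
    (hY_nonneg : ∀ j ω, 0 ≤ Y j ω)
    (G : ℝ → ℝ) (hG : ∀ y, (μ (Iic y)).toReal = G y) (hGcont : Continuous G)
    (z : ℝ) (hz : 0 < z)
    (w f : ℝ → ℝ → ℝ)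
    (hw_cont : Continuous fun p : ℝ × ℝ => w p.1 p.2)
    (hw_nonneg : ∀ u v, 0 ≤ w u v)
    (hw_anti : ∀ v, Antitone fun u => w u v)
    (hf_cont : Continuous fun p : ℝ × ℝ => f p.1 p.2)
    (hf_nonneg : ∀ y t, 0 ≤ f y t)
    (hf_anti : ∀ t, Antitone fun y => f y t) :
    ∀ᵐ ω ∂P, Tendsto
      (fun n : ℕ => (n : ℝ)⁻¹ * ∑ j ∈ Finset.range n,
        w (empCDF Y n ω (Y j ω)) (empCDF Y n ω z) * f (Y j ω) z *
          (if Y j ω ≤ z then (1 : ℝ) else 0))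
      atTop (nhds (∫ y in Icc 0 z, w (G y) (G z) * f y z ∂μ)) := by
  classical
  -- Basic facts about G and μ
  have hIio : μ (Iio 0) = 0 := by
    rw [← hY_law 0, Measure.map_apply (hY_meas 0) measurableSet_Iio]
    have hpre : Y 0 ⁻¹' (Iio 0) = ∅ := by
      ext ω
      simp [not_lt.mpr (hY_nonneg 0 ω)]
    simp [hpre]
  have hae : ∀ᵐ y ∂μ, 0 ≤ y := by
    rw [ae_iff]
    have : {y : ℝ | ¬ 0 ≤ y} = Iio 0 := by ext y; simp [not_le]
    rw [this]
    exact hIio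
  have hG0 : ∀ y, 0 ≤ G y := fun y => (hG y) ▸ ENNReal.toReal_nonneg
  have hG1 : ∀ y, G y ≤ 1 := by
    intro y
    rw [← hG y]
    have := ENNReal.toReal_mono (measure_ne_top μ univ) (measure_mono (subset_univ (Iic y)))
    simpa [measure_univ] using this
  -- the limiting function
  set g : ℝ → ℝ := fun y => w (G y) (G z) * f y z * (if y ≤ z then (1:ℝ) else 0) with hgdef
  have c1 : Continuous fun y => w (G y) (G z) := hw_cont.comp (hGcont.prodMk continuous_const)
  have c2 : Continuous fun y => f y z := hf_cont.comp (continuous_id.prodMk continuous_const)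
  have hgmeas : Measurable g :=
    (c1.measurable.mul c2.measurable).mul
      (Measurable.ite measurableSet_Iic measurable_const measurable_const)
  have hC0 : (0:ℝ) ≤ w 0 (G z) * f 0 z := mul_nonneg (hw_nonneg _ _) (hf_nonneg _ _)
  have hb : ∀ᵐ y ∂μ, |g y| ≤ w 0 (G z) * f 0 z := by
    filter_upwards [hae] with y hy
    by_cases h : y ≤ z
    · have hg_eval : g y = w (G y) (G z) * f y z := by
        simp only [hgdef, if_pos h, mul_one]
      rw [hg_eval, abs_of_nonneg (mul_nonneg (hw_nonneg _ _) (hf_nonneg _ _))]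
      exact mul_le_mul (hw_anti (G z) (hG0 y)) (hf_anti z hy) (hf_nonneg _ _) (hw_nonneg _ _)
    · have hg_eval : g y = 0 := by simp only [hgdef, if_neg h, mul_zero]
      rw [hg_eval, abs_zero]
      exact hC0
  -- identify the integral
  have hL : (∫ y, g y ∂μ) = ∫ y in Icc 0 z, w (G y) (G z) * f y z ∂μ := by
    have h1 : g = (Iic z).indicator (fun y => w (G y) (G z) * f y z) := by
      funext y
      by_cases h : y ≤ z <;> simp [hgdef, indicator, mem_Iic, h]
    have hsetae : Iic z =ᵐ[μ] Icc 0 z := by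
      refine (MeasureTheory.ae_eq_set).mpr ⟨?_, ?_⟩
      · refine measure_mono_null (fun x hx => ?_) hIio
        simp only [mem_diff, mem_Iic, mem_Icc, not_and, not_le] at hx
        rcases hx with ⟨hxz, hx2⟩
        by_contra hcon
        simp only [mem_Iio, not_lt] at hcon
        linarith [hx2 hcon]
      · have : Icc (0:ℝ) z \ Iic z = ∅ := by
          ext x; simp only [mem_diff, mem_Icc, mem_Iic, mem_empty_iff_false, iff_false]
          rintro ⟨⟨_, h2⟩, h3⟩; exact h3 h2
        rw [this]; exact measure_empty
    rw [h1, integral_indicator measurableSet_Iic]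
    exact setIntegral_congr_set hsetae
  have hS := slln_comp P μ Y hY_meas hY_indep hY_law g hgmeas _ hb
  have hGC := gc_as P μ Y hY_meas hY_indep hY_law G hG hGcont hIio
  filter_upwards [hS, hGC] with ω hSω hGCω
  rw [hL] at hSω
  -- the difference tends to zero
  have hdiff : Tendsto (fun n : ℕ => (n : ℝ)⁻¹ * ∑ j ∈ Finset.range n,
      (w (empCDF Y n ω (Y j ω)) (empCDF Y n ω z) * f (Y j ω) z *
        (if Y j ω ≤ z then (1:ℝ) else 0) - g (Y j ω))) atTop (𝓝 0) := by
    rw [NormedAddCommGroup.tendsto_nhds_zero]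
    intro ε hε
    have hCf0 : (0:ℝ) < f 0 z + 1 := by linarith [hf_nonneg 0 z]
    set Cf := f 0 z + 1 with hCfdef
    have hK : IsCompact (Icc (0:ℝ) 1 ×ˢ Icc (0:ℝ) 1) := isCompact_Icc.prod isCompact_Icc
    have hUC := hK.uniformContinuousOn_of_continuous hw_cont.continuousOn
    obtain ⟨δ, hδ0, hδ⟩ := Metric.uniformContinuousOn_iff.mp hUC (ε/(2*Cf)) (by positivity)
    filter_upwards [hGCω (δ/2) (by positivity)] with n hn
    have hterm : ∀ j, |w (empCDF Y n ω (Y j ω)) (empCDF Y n ω z) * f (Y j ω) z *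
        (if Y j ω ≤ z then (1:ℝ) else 0) - g (Y j ω)| ≤ ε/2 := by
      intro j
      by_cases hj : Y j ω ≤ z
      · have heq : w (empCDF Y n ω (Y j ω)) (empCDF Y n ω z) * f (Y j ω) z *
            (if Y j ω ≤ z then (1:ℝ) else 0) - g (Y j ω)
            = (w (empCDF Y n ω (Y j ω)) (empCDF Y n ω z) - w (G (Y j ω)) (G z)) * f (Y j ω) z := by
          simp only [hgdef, if_pos hj]; ring
        rw [heq, abs_mul, abs_of_nonneg (hf_nonneg _ _)]
        have hp : ((empCDF Y n ω (Y j ω), empCDF Y n ω z) : ℝ × ℝ) ∈ Icc (0:ℝ) 1 ×ˢ Icc (0:ℝ) 1 :=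
          mem_prod.mpr ⟨⟨empCDF_nonneg Y n ω _, empCDF_le_one Y n ω _⟩,
            ⟨empCDF_nonneg Y n ω _, empCDF_le_one Y n ω _⟩⟩
        have hq : ((G (Y j ω), G z) : ℝ × ℝ) ∈ Icc (0:ℝ) 1 ×ˢ Icc (0:ℝ) 1 :=
          mem_prod.mpr ⟨⟨hG0 _, hG1 _⟩, ⟨hG0 _, hG1 _⟩⟩
        have hdist : dist ((empCDF Y n ω (Y j ω), empCDF Y n ω z) : ℝ × ℝ)
            ((G (Y j ω), G z) : ℝ × ℝ) < δ := by
          rw [Prod.dist_eq]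
          apply max_lt
          · rw [Real.dist_eq]
            calc |empCDF Y n ω (Y j ω) - G (Y j ω)| ≤ δ/2 := hn (Y j ω)
              _ < δ := by linarith
          · rw [Real.dist_eq]
            calc |empCDF Y n ω z - G z| ≤ δ/2 := hn z
              _ < δ := by linarith
        have hw_close := hδ _ hp _ hq hdist
        rw [Real.dist_eq] at hw_close
        have hfb : f (Y j ω) z ≤ Cf := by
          have := hf_anti z (hY_nonneg j ω)
          simp only [hCfdef]
          linarith
        calc |w (empCDF Y n ω (Y j ω)) (empCDF Y n ω z) - w (G (Y j ω)) (G z)| * f (Y j ω) z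
            ≤ (ε/(2*Cf)) * Cf := by
              apply mul_le_mul hw_close.le hfb (hf_nonneg _ _) (by positivity)
          _ = ε/2 := by field_simp
      · have heq : w (empCDF Y n ω (Y j ω)) (empCDF Y n ω z) * f (Y j ω) z *
            (if Y j ω ≤ z then (1:ℝ) else 0) - g (Y j ω) = 0 := by
          simp only [hgdef, if_neg hj, mul_zero, sub_zero]
        rw [heq, abs_zero]
        positivity
    have hsum : |∑ j ∈ Finset.range n, (w (empCDF Y n ω (Y j ω)) (empCDF Y n ω z) * f (Y j ω) z *
        (if Y j ω ≤ z then (1:ℝ) else 0) - g (Y j ω))| ≤ (n:ℝ) * (ε/2) := by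
      calc |∑ j ∈ Finset.range n, _| ≤ ∑ j ∈ Finset.range n, |w (empCDF Y n ω (Y j ω)) (empCDF Y n ω z) * f (Y j ω) z *
            (if Y j ω ≤ z then (1:ℝ) else 0) - g (Y j ω)| := Finset.abs_sum_le_sum_abs _ _
        _ ≤ ∑ j ∈ Finset.range n, (ε/2) := Finset.sum_le_sum (fun j _ => hterm j)
        _ = (n:ℝ) * (ε/2) := by rw [Finset.sum_const, Finset.card_range, nsmul_eq_mul]
    have hnn : (n:ℝ)⁻¹ * ((n:ℝ) * (ε/2)) ≤ ε/2 := by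
      rcases Nat.eq_zero_or_pos n with h | h
      · simp [h]; positivity
      · have : (0:ℝ) < n := by exact_mod_cast h
        rw [← mul_assoc, inv_mul_cancel₀ this.ne', one_mul]
    calc ‖(n : ℝ)⁻¹ * ∑ j ∈ Finset.range n, (w (empCDF Y n ω (Y j ω)) (empCDF Y n ω z) * f (Y j ω) z *
        (if Y j ω ≤ z then (1:ℝ) else 0) - g (Y j ω))‖
        = (n:ℝ)⁻¹ * |∑ j ∈ Finset.range n, (w (empCDF Y n ω (Y j ω)) (empCDF Y n ω z) * f (Y j ω) z *
            (if Y j ω ≤ z then (1:ℝ) else 0) - g (Y j ω))| := by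
          rw [Real.norm_eq_abs, abs_mul, abs_of_nonneg (by positivity : (0:ℝ) ≤ (n:ℝ)⁻¹)]
      _ ≤ (n:ℝ)⁻¹ * ((n:ℝ) * (ε/2)) := by
          apply mul_le_mul_of_nonneg_left hsum (by positivity)
      _ ≤ ε/2 := hnn
      _ < ε := by linarith
  have heq : (fun n : ℕ => (n : ℝ)⁻¹ * ∑ j ∈ Finset.range n,
      w (empCDF Y n ω (Y j ω)) (empCDF Y n ω z) * f (Y j ω) z *
        (if Y j ω ≤ z then (1:ℝ) else 0))
      = fun n : ℕ => ((n : ℝ)⁻¹ * ∑ j ∈ Finset.range n,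
        (w (empCDF Y n ω (Y j ω)) (empCDF Y n ω z) * f (Y j ω) z *
          (if Y j ω ≤ z then (1:ℝ) else 0) - g (Y j ω)))
        + (n : ℝ)⁻¹ * ∑ j ∈ Finset.range n, g (Y j ω) := by
    funext n
    rw [← mul_add, Finset.sum_sub_distrib]
    ring_nf
  rw [heq]
  simpa using hdiff.add hSω
end

section
/- Fix z > 0, w ∈ 𝒲, f ∈ ℱ with w and f continuously differentiable. Define the operator φ_{w,f} on 𝒦 = {k : ℝ → [0,1] increasing} by φ_{w,f}(k) = ∫₀ᶻ w(k(y), k(z)) f(y,z) dG(y). Then φ_{w,f} is Hadamard-differentiable at every k ∈ 𝒦 tangentially to 𝒦' = {k ∈ 𝒦 : k continuous}, with derivative φ'_{w,f}[k](s) = ∫₀ᶻ ( s(y) ∂_u w(k(y),k(z)) + s(z) ∂_v w(k(y),k(z)) ) f(y,z) dG(y) for s ∈ 𝒦'. -/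
open MeasureTheory Set Filter

lemma quot_tendsto (g : ℝ × ℝ → ℝ) (hg : ContDiff ℝ 1 g) (p : ℝ × ℝ)
    (q : ℕ → ℝ × ℝ) (ql : ℝ × ℝ) (hq : Tendsto q atTop (nhds ql))
    (t : ℕ → ℝ) (ht : Tendsto t atTop (nhds 0)) (ht_ne : ∀ n, t n ≠ 0) :
    Tendsto (fun n => (g (p + t n • q n) - g p) / t n) atTop
      (nhds (fderiv ℝ g p ql)) := by
  set D := fderiv ℝ g p with hD
  have hd : HasFDerivAt g D p := (hg.differentiable one_ne_zero p).hasFDerivAt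
  have hlo : (fun h : ℝ × ℝ => g (p + h) - g p - D h) =o[nhds 0] fun h => h :=
    hasFDerivAt_iff_isLittleO_nhds_zero.mp hd
  have hh : Tendsto (fun n => t n • q n) atTop (nhds 0) := by
    have := ht.smul hq
    simpa using this
  have o1 : (fun n => g (p + t n • q n) - g p - D (t n • q n)) =o[atTop]
      (fun n => t n • q n) := hlo.comp_tendsto hh
  have hO : (fun n => t n • q n) =O[atTop] t := by
    rw [Asymptotics.isBigO_iff]
    refine ⟨‖ql‖ + 1, ?_⟩
    have hb : ∀ᶠ n in atTop, ‖q n‖ < ‖ql‖ + 1 :=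
      (hq.norm.eventually (eventually_lt_nhds (by linarith [norm_nonneg ql] : ‖ql‖ < ‖ql‖ + 1)))
    filter_upwards [hb] with n hn
    rw [norm_smul]
    calc ‖t n‖ * ‖q n‖ ≤ ‖t n‖ * (‖ql‖ + 1) :=
          mul_le_mul_of_nonneg_left hn.le (norm_nonneg _)
      _ = (‖ql‖ + 1) * ‖t n‖ := mul_comm _ _
  have o2 := o1.trans_isBigO hO
  have h0 : Tendsto (fun n => (g (p + t n • q n) - g p - D (t n • q n)) / t n)
      atTop (nhds 0) := o2.tendsto_div_nhds_zero
  have hDq : Tendsto (fun n => D (q n)) atTop (nhds (D ql)) :=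
    (D.continuous.tendsto _).comp hq
  have hsum := h0.add hDq
  rw [zero_add] at hsum
  refine hsum.congr fun n => ?_
  have hm : D (t n • q n) = t n * D (q n) := by
    rw [D.map_smul, smul_eq_mul]
  rw [hm]
  have htn := ht_ne n
  field_simp
  ring

/-- The class of increasing functions from `ℝ` into `[0,1]`. -/
def Kclass : Set (ℝ → ℝ) := {k | Monotone k ∧ ∀ y, k y ∈ Icc (0 : ℝ) 1}

/-- Partial derivative of a two-variable function in its first argument. -/
noncomputable def pd1 (w : ℝ → ℝ → ℝ) (u v : ℝ) : ℝ :=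
  fderiv ℝ (fun p : ℝ × ℝ => w p.1 p.2) (u, v) (1, 0)

/-- Partial derivative of a two-variable function in its second argument. -/
noncomputable def pd2 (w : ℝ → ℝ → ℝ) (u v : ℝ) : ℝ :=
  fderiv ℝ (fun p : ℝ × ℝ => w p.1 p.2) (u, v) (0, 1)

/-- The operator `φ_{w,f}(k) = ∫₀ᶻ w(k(y),k(z)) f(y,z) dG(y)`. -/
noncomputable def phiOp (μ : Measure ℝ) (z : ℝ) (w f : ℝ → ℝ → ℝ)
    (k : ℝ → ℝ) : ℝ :=
  ∫ y in Icc 0 z, w (k y) (k z) * f y z ∂μ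

theorem stmt6
    (μ : Measure ℝ) [IsProbabilityMeasure μ]
    (z : ℝ) (hz : 0 < z)
    (w f : ℝ → ℝ → ℝ)
    (hw : ContDiff ℝ 1 fun p : ℝ × ℝ => w p.1 p.2)
    (hf : ContDiff ℝ 1 fun p : ℝ × ℝ => f p.1 p.2)
    (hw_nonneg : ∀ u v, 0 ≤ w u v)
    (hw_anti : ∀ v, Antitone fun u => w u v)
    (hf_nonneg : ∀ y t, 0 ≤ f y t)
    (hf_anti : ∀ t, Antitone fun y => f y t)
    (k : ℝ → ℝ) (hk : k ∈ Kclass)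
    (s : ℝ → ℝ) (hs : s ∈ Kclass) (hs_cont : Continuous s)
    (t : ℕ → ℝ) (ht : Tendsto t atTop (nhds 0)) (ht_ne : ∀ n, t n ≠ 0)
    (st : ℕ → ℝ → ℝ)
    (hst_mem : ∀ n, st n ∈ Kclass)
    (hst_pert : ∀ n, (fun y => k y + t n * st n y) ∈ Kclass)
    (hst_tendsto : TendstoUniformly st s atTop) :
    Tendsto (fun n =>
        (phiOp μ z w f (fun y => k y + t n * st n y) - phiOp μ z w f k) / t n)
      atTop
      (nhds (∫ y in Icc 0 z,
        (s y * pd1 w (k y) (k z) + s z * pd2 w (k y) (k z)) * f y z ∂μ)) := by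
  classical
  set g : ℝ × ℝ → ℝ := fun p => w p.1 p.2 with hg_def
  set K : Set (ℝ × ℝ) := Icc (0:ℝ) 1 ×ˢ Icc (0:ℝ) 1 with hK_def
  have hKc : IsCompact K := isCompact_Icc.prod isCompact_Icc
  have hKconv : Convex ℝ K := (convex_Icc 0 1).prod (convex_Icc 0 1)
  -- bound on the derivative over K
  obtain ⟨C, hC⟩ : ∃ C, ∀ p ∈ K, ‖fderiv ℝ g p‖ ≤ C :=
    hKc.exists_bound_of_continuousOn (hw.continuous_fderiv one_ne_zero).continuousOn
  have hC0 : 0 ≤ C :=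
    le_trans (norm_nonneg _) (hC (0,0) (by simp [hK_def]))
  -- bound on |w| over K
  obtain ⟨M, hM⟩ : ∃ M, ∀ p ∈ K, ‖g p‖ ≤ M :=
    hKc.exists_bound_of_continuousOn hw.continuous.continuousOn
  -- membership of relevant points in K
  have hmemk : ∀ y, ((k y, k z) : ℝ × ℝ) ∈ K := fun y => ⟨hk.2 y, hk.2 z⟩
  have hmemp : ∀ n y,
      ((k y + t n * st n y, k z + t n * st n z) : ℝ × ℝ) ∈ K :=
    fun n y => ⟨(hst_pert n).2 y, (hst_pert n).2 z⟩
  -- measurability helpers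
  have hf_cont : Continuous fun y => f y z :=
    hf.continuous.comp (continuous_id.prodMk continuous_const)
  have hmeas : ∀ (k' : ℝ → ℝ), Measurable k' →
      AEStronglyMeasurable (fun y => w (k' y) (k' z) * f y z)
        (μ.restrict (Icc 0 z)) := by
    intro k' hk'
    exact ((hw.continuous.measurable.comp
      (hk'.prodMk measurable_const)).mul hf_cont.measurable).aestronglyMeasurable
  -- integrability of the basic integrands
  have hInt : ∀ (k' : ℝ → ℝ), k' ∈ Kclass →
      IntegrableOn (fun y => w (k' y) (k' z) * f y z) (Icc 0 z) μ := by
    intro k' hk'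
    refine Integrable.mono' (integrable_const (M * f 0 z))
      (hmeas k' hk'.1.measurable) ?_
    filter_upwards [ae_restrict_mem measurableSet_Icc] with y hy
    have h1 : ‖w (k' y) (k' z)‖ ≤ M := hM ⟨k' y, k' z⟩ ⟨hk'.2 y, hk'.2 z⟩
    have h2 : ‖f y z‖ ≤ f 0 z := by
      rw [Real.norm_eq_abs, abs_of_nonneg (hf_nonneg y z)]
      exact hf_anti z hy.1
    calc ‖w (k' y) (k' z) * f y z‖ = ‖w (k' y) (k' z)‖ * ‖f y z‖ := norm_mul _ _
      _ ≤ M * f 0 z := mul_le_mul h1 h2 (norm_nonneg _)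
          (le_trans (norm_nonneg _) h1)
  -- difference quotient integrand
  set F : ℕ → ℝ → ℝ := fun n y =>
    (w (k y + t n * st n y) (k z + t n * st n z) - w (k y) (k z)) / t n * f y z
    with hF_def
  have key : ∀ n,
      (phiOp μ z w f (fun y => k y + t n * st n y) - phiOp μ z w f k) / t n
        = ∫ y in Icc 0 z, F n y ∂μ := by
    intro n
    rw [phiOp, phiOp, ← integral_sub (hInt _ (hst_pert n)) (hInt k hk),
      ← integral_div]
    congr 1
    funext y
    have := ht_ne n
    simp only [hF_def]
    ring
  refine Tendsto.congr (fun n => (key n).symm) ?_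
  refine tendsto_integral_of_dominated_convergence (fun _ => C * f 0 z)
    ?_ (integrable_const _) ?_ ?_
  · -- measurability of F n
    intro n
    refine AEStronglyMeasurable.mul ?_ hf_cont.measurable.aestronglyMeasurable
    refine Measurable.aestronglyMeasurable ?_
    refine Measurable.div_const ?_ _
    refine Measurable.sub ?_ ?_
    · exact hw.continuous.measurable.comp
        (((hk.1.measurable.add (((hst_mem n).1.measurable).const_mul (t n))).prodMk
          measurable_const))
    · exact hw.continuous.measurable.comp (hk.1.measurable.prodMk measurable_const)
  · -- bound
    intro n
    filter_upwards [ae_restrict_mem measurableSet_Icc] with y hy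
    have hdiff : ∀ p ∈ K, DifferentiableAt ℝ g p :=
      fun p _ => (hw.differentiable one_ne_zero) p
    have hmvt := hKconv.norm_image_sub_le_of_norm_fderiv_le hdiff hC
      (hmemk y) (hmemp n y)
    have hsub : ((k y + t n * st n y, k z + t n * st n z) : ℝ × ℝ)
        - (k y, k z) = t n • ((st n y, st n z) : ℝ × ℝ) := by
      simp [Prod.ext_iff, smul_eq_mul]
    have hq1 : ‖((st n y, st n z) : ℝ × ℝ)‖ ≤ 1 := by
      rw [Prod.norm_def]
      simp only [Real.norm_eq_abs]
      have h1 := (hst_mem n).2 y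
      have h2 := (hst_mem n).2 z
      apply max_le <;> rw [abs_le] <;> constructor <;> linarith [h1.1, h1.2, h2.1, h2.2]
    have hnorm : ‖w (k y + t n * st n y) (k z + t n * st n z) - w (k y) (k z)‖
        ≤ C * (|t n| * 1) := by
      calc ‖w (k y + t n * st n y) (k z + t n * st n z) - w (k y) (k z)‖
          = ‖g (k y + t n * st n y, k z + t n * st n z) - g (k y, k z)‖ := rfl
        _ ≤ C * ‖((k y + t n * st n y, k z + t n * st n z) : ℝ × ℝ) - (k y, k z)‖ := hmvt
        _ = C * ‖t n • ((st n y, st n z) : ℝ × ℝ)‖ := by rw [hsub]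
        _ = C * (|t n| * ‖((st n y, st n z) : ℝ × ℝ)‖) := by
            rw [norm_smul, Real.norm_eq_abs]
        _ ≤ C * (|t n| * 1) := by
            apply mul_le_mul_of_nonneg_left _ hC0
            exact mul_le_mul_of_nonneg_left hq1 (abs_nonneg _)
    have hfy : ‖f y z‖ ≤ f 0 z := by
      rw [Real.norm_eq_abs, abs_of_nonneg (hf_nonneg y z)]
      exact hf_anti z hy.1
    have htn : (0:ℝ) < |t n| := abs_pos.mpr (ht_ne n)
    calc ‖F n y‖
        = ‖w (k y + t n * st n y) (k z + t n * st n z) - w (k y) (k z)‖ / |t n|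
            * ‖f y z‖ := by
          rw [hF_def]; rw [norm_mul, norm_div, Real.norm_eq_abs (t n)]
      _ ≤ (C * (|t n| * 1)) / |t n| * (f 0 z) := by
          apply mul_le_mul _ hfy (norm_nonneg _)
          · positivity
          · exact div_le_div_of_nonneg_right hnorm htn.le
      _ = C * f 0 z := by field_simp
  · -- pointwise convergence
    refine Eventually.of_forall fun y => ?_
    have hqy : Tendsto (fun n => ((st n y, st n z) : ℝ × ℝ)) atTop
        (nhds (s y, s z)) :=
      (hst_tendsto.tendsto_at y).prodMk_nhds (hst_tendsto.tendsto_at z)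
    have h := (quot_tendsto g hw (k y, k z) _ _ hqy t ht ht_ne).mul_const (f y z)
    have hval : fderiv ℝ g (k y, k z) (s y, s z)
        = s y * pd1 w (k y) (k z) + s z * pd2 w (k y) (k z) := by
      have hdecomp : ((s y, s z) : ℝ × ℝ)
          = s y • ((1:ℝ), (0:ℝ)) + s z • ((0:ℝ), (1:ℝ)) := by
        simp [Prod.ext_iff]
      rw [hdecomp, map_add, (fderiv ℝ g (k y, k z)).map_smul,
        (fderiv ℝ g (k y, k z)).map_smul]
      simp [pd1, pd2, smul_eq_mul, hg_def]
    rw [hval] at h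
    refine h.congr fun n => ?_
    have harg : ((k y, k z) : ℝ × ℝ) + t n • ((st n y, st n z) : ℝ × ℝ)
        = (k y + t n * st n y, k z + t n * st n z) := by
      simp [Prod.ext_iff, smul_eq_mul]
    rw [hF_def]
    simp only [harg]
    rfl
end
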